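/- Let B be a chain with no maximal element and let r ∈ ℕ, with B disjoint from the r-element chain r = {0 < 1 < ⋯ < r−1}. Assume that every order embedding g : B + r → B + r satisfies g(i) = i for every i ∈ r. If T(n, B + r) < ∞ for some n ∈ ℕ, then T(n, B + r) = Σ_{j=0}^{min{n,r}} C(r, j) · T(n − j, B), where C(r, j) is the binomial coefficient. -/

import Mathlib

/-- `t` is admissible for `(n, α)`: for every coloring of the order embeddings of the
`n`-element chain into `α` with `k ≥ 2` colors, there is a suborder of `α` order-isomorphic
to `α` (given as the range of a self-embedding `e`) on whose copies of `n` the coloring takes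
at most `t` values. -/
def BrdAdmissible (α : Type*) [LinearOrder α] (n t : ℕ) : Prop :=
  ∀ k : ℕ, 2 ≤ k → ∀ χ : (Fin n ↪o α) → Fin k,
    ∃ e : α ↪o α,
      ({c : Fin k | ∃ f : Fin n ↪o α, χ (f.trans e) = c}).ncard ≤ t

/-- The big Ramsey degree `T(n, α) ∈ ℕ ∪ {∞}`: the least admissible `t`, or `∞` if none. -/
noncomputable def brd (α : Type*) [LinearOrder α] (n : ℕ) : ℕ∞ :=
  sInf {t : ℕ∞ | ∃ t₀ : ℕ, t = (t₀ : ℕ∞) ∧ BrdAdmissible α n t₀}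

open Finset

namespace BrdAux

variable {β : Type*} [LinearOrder β] {r n : ℕ}

/-- Extend a self-embedding of `β` to `β ⊕ₗ Fin r` by the identity on `Fin r`. -/
def extendEmb (e : β ↪o β) : (β ⊕ₗ Fin r) ↪o (β ⊕ₗ Fin r) :=
  OrderEmbedding.ofStrictMono (fun x => toLex (Sum.map e id (ofLex x)))
    (by
      intro x y h
      rw [Sum.Lex.lt_def] at h
      rw [Sum.Lex.toLex_lt_toLex]
      cases h with
      | inl h => exact Sum.Lex.inl (e.strictMono h)
      | inr h => exact Sum.Lex.inr h
      | sep a b => exact Sum.Lex.sep _ _)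

@[simp] lemma extendEmb_inl (e : β ↪o β) (b : β) :
    extendEmb (r := r) e (toLex (Sum.inl b)) = toLex (Sum.inl (e b)) := rfl

@[simp] lemma extendEmb_inr (e : β ↪o β) (i : Fin r) :
    extendEmb (r := r) e (toLex (Sum.inr i)) = toLex (Sum.inr i) := rfl

lemma left_val (e : (β ⊕ₗ Fin r) ↪o (β ⊕ₗ Fin r))
    (he : ∀ i, e (toLex (Sum.inr i)) = toLex (Sum.inr i)) (b : β) :
    ∃ c, e (toLex (Sum.inl b)) = toLex (Sum.inl c) := by
  rcases hx : ofLex (e (toLex (Sum.inl b))) with c | i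
  · exact ⟨c, by rw [← hx]; rfl⟩
  · exfalso
    have hx' : e (toLex (Sum.inl b)) = toLex (Sum.inr i) := by
      rw [← hx]; rfl
    have := e.injective (hx'.trans (he i).symm)
    exact Sum.inl_ne_inr (toLex.injective this)

/-- Restrict a self-embedding of `β ⊕ₗ Fin r` fixing `Fin r` to a self-embedding of `β`. -/
noncomputable def restrictEmb (e : (β ⊕ₗ Fin r) ↪o (β ⊕ₗ Fin r))
    (he : ∀ i, e (toLex (Sum.inr i)) = toLex (Sum.inr i)) : β ↪o β :=
  OrderEmbedding.ofStrictMono (fun b => (left_val e he b).choose)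
    (by
      intro a b hab
      have ha := (left_val e he a).choose_spec
      have hb := (left_val e he b).choose_spec
      have h : e (toLex (Sum.inl a)) < e (toLex (Sum.inl b)) :=
        e.strictMono (Sum.Lex.inl_lt_inl_iff.2 hab)
      rw [ha, hb] at h
      exact Sum.Lex.inl_lt_inl_iff.1 h)

lemma restrict_spec (e : (β ⊕ₗ Fin r) ↪o (β ⊕ₗ Fin r))
    (he : ∀ i, e (toLex (Sum.inr i)) = toLex (Sum.inr i)) (b : β) :
    e (toLex (Sum.inl b)) = toLex (Sum.inl (restrictEmb e he b)) :=
  (left_val e he b).choose_spec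

lemma restrict_extend (e : β ↪o β)
    (he : ∀ i, extendEmb (r := r) e (toLex (Sum.inr i)) = toLex (Sum.inr i)) :
    restrictEmb (extendEmb (r := r) e) he = e := by
  ext b
  have h1 := restrict_spec (extendEmb (r := r) e) he b
  rw [extendEmb_inl] at h1
  have := toLex.injective h1.symm
  exact Sum.inl_injective this

variable {β : Type*} [LinearOrder β] {r n : ℕ}

/-- Glue a bottom embedding into `β` and a top embedding into `Fin r` to an embedding of
`Fin n` into `β ⊕ₗ Fin r`. -/
def glue {j : ℕ} (g : Fin (n - j) ↪o β) (h : Fin j ↪o Fin r) :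
    Fin n ↪o (β ⊕ₗ Fin r) :=
  OrderEmbedding.ofStrictMono
    (fun i => if hi : (i : ℕ) < n - j then toLex (Sum.inl (g ⟨i, hi⟩))
              else toLex (Sum.inr (h ⟨(i : ℕ) - (n - j), by omega⟩)))
    (by
      intro a b hab
      have hab' : (a : ℕ) < b := hab
      dsimp only
      by_cases ha : (a : ℕ) < n - j <;> by_cases hb : (b : ℕ) < n - j
      · rw [dif_pos ha, dif_pos hb]
        exact Sum.Lex.inl_lt_inl_iff.2 (g.strictMono (by exact hab'))
      · rw [dif_pos ha, dif_neg hb]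
        exact Sum.Lex.inl_lt_inr _ _
      · omega
      · rw [dif_neg ha, dif_neg hb]
        exact Sum.Lex.inr_lt_inr_iff.2 (h.strictMono (by simp only [Fin.mk_lt_mk]; omega)))

lemma glue_apply_pos {j : ℕ} (g : Fin (n - j) ↪o β) (h : Fin j ↪o Fin r) (i : Fin n)
    (hi : (i : ℕ) < n - j) : glue g h i = toLex (Sum.inl (g ⟨i, hi⟩)) := dif_pos hi

lemma glue_apply_neg {j : ℕ} (g : Fin (n - j) ↪o β) (h : Fin j ↪o Fin r) (i : Fin n)
    (hi : ¬ (i : ℕ) < n - j) :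
    glue g h i = toLex (Sum.inr (h ⟨(i : ℕ) - (n - j), by omega⟩)) := dif_neg hi

lemma glue_congr {j j' : ℕ} (hjj : j = j')
    {g : Fin (n - j) ↪o β} {g' : Fin (n - j') ↪o β}
    (hg : ∀ i h1 h2, g ⟨i, h1⟩ = g' ⟨i, h2⟩)
    {h : Fin j ↪o Fin r} {h' : Fin j' ↪o Fin r}
    (hh : ∀ i h1 h2, h ⟨i, h1⟩ = h' ⟨i, h2⟩) :
    glue (n := n) g h = glue g' h' := by
  subst hjj
  have hg' : g = g' := by
    ext i
    have := hg i i.2 i.2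
    simpa using this
  have hh' : h = h' := by
    ext i
    have := hh i i.2 i.2
    simp only [Fin.eta] at this
    exact congrArg Fin.val this
  rw [hg', hh']

/-- The set of indices mapped into the `β` part. -/
def leftSet (f : Fin n ↪o (β ⊕ₗ Fin r)) : Finset (Fin n) :=
  univ.filter (fun i => (ofLex (f i)).isLeft)

def lc (f : Fin n ↪o (β ⊕ₗ Fin r)) : ℕ := (leftSet f).card

def rc (f : Fin n ↪o (β ⊕ₗ Fin r)) : ℕ := n - lc f

lemma lc_le (f : Fin n ↪o (β ⊕ₗ Fin r)) : lc f ≤ n :=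
  (card_filter_le _ _).trans_eq (by simp)

lemma hlc (f : Fin n ↪o (β ⊕ₗ Fin r)) : n - rc f = lc f := by
  have := lc_le f; unfold rc; omega

lemma leftSet_lower (f : Fin n ↪o (β ⊕ₗ Fin r)) {i i' : Fin n} (hii : i ≤ i')
    (h : i' ∈ leftSet f) : i ∈ leftSet f := by
  simp only [leftSet, mem_filter, mem_univ, true_and] at h ⊢
  obtain ⟨c, hc⟩ := Sum.isLeft_iff.1 h
  have hc' : f i' = toLex (Sum.inl c) := by rw [← hc]; rfl
  have hle : f i ≤ toLex (Sum.inl c) := hc' ▸ f.monotone hii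
  rcases hx : ofLex (f i) with b | s
  · simp
  · exfalso
    have hx' : f i = toLex (Sum.inr s) := by rw [← hx]; rfl
    rw [hx'] at hle
    exact Sum.Lex.not_inr_le_inl hle

lemma mem_leftSet_iff (f : Fin n ↪o (β ⊕ₗ Fin r)) (i : Fin n) :
    i ∈ leftSet f ↔ (i : ℕ) < lc f := by
  constructor
  · intro h
    have hsub : Finset.Iic i ⊆ leftSet f := fun i' hi' =>
      leftSet_lower f (Finset.mem_Iic.1 hi') h
    have := Finset.card_le_card hsub
    rw [Fin.card_Iic] at this
    unfold lc
    omega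
  · intro h
    by_contra hns
    have hsub : leftSet f ⊆ Finset.Iio i := by
      intro i' hi'
      rw [Finset.mem_Iio]
      by_contra hii
      exact hns (leftSet_lower f (not_lt.1 hii) hi')
    have := Finset.card_le_card hsub
    rw [Fin.card_Iio] at this
    unfold lc at h
    omega

lemma isLeft_iff_lt (f : Fin n ↪o (β ⊕ₗ Fin r)) (i : Fin n) :
    (ofLex (f i)).isLeft ↔ (i : ℕ) < lc f := by
  rw [← mem_leftSet_iff]
  simp [leftSet]

lemma bottom_val (f : Fin n ↪o (β ⊕ₗ Fin r)) (i : Fin (lc f)) :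
    ∃ b, f ⟨i, lt_of_lt_of_le i.2 (lc_le f)⟩ = toLex (Sum.inl b) := by
  have h : (ofLex (f ⟨i, lt_of_lt_of_le i.2 (lc_le f)⟩)).isLeft := by
    rw [isLeft_iff_lt]; exact i.2
  obtain ⟨b, hb⟩ := Sum.isLeft_iff.1 h
  exact ⟨b, by rw [← hb]; rfl⟩

lemma top_val (f : Fin n ↪o (β ⊕ₗ Fin r)) (i : Fin (rc f)) :
    ∃ s, f ⟨lc f + i, by have := i.2; unfold rc at this; omega⟩ = toLex (Sum.inr s) := by
  have h : ¬ (ofLex (f ⟨lc f + i, by have := i.2; unfold rc at this; omega⟩)).isLeft := by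
    rw [isLeft_iff_lt]; simp
  rcases hx : ofLex (f ⟨lc f + i, by have := i.2; unfold rc at this; omega⟩) with b | s
  · exact absurd (by rw [hx]; rfl) h
  · exact ⟨s, by rw [← hx]; rfl⟩

noncomputable def bottomPart (f : Fin n ↪o (β ⊕ₗ Fin r)) : Fin (lc f) ↪o β :=
  OrderEmbedding.ofStrictMono (fun i => (bottom_val f i).choose)
    (by
      intro a b hab
      have ha := (bottom_val f a).choose_spec
      have hb := (bottom_val f b).choose_spec
      dsimp only
      apply (Sum.Lex.inl_lt_inl_iff (β := Fin r)).1
      rw [← ha, ← hb]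
      exact f.strictMono (by simp only [Fin.mk_lt_mk]; exact hab))

lemma bottomPart_spec (f : Fin n ↪o (β ⊕ₗ Fin r)) (i : Fin (lc f)) :
    f ⟨i, lt_of_lt_of_le i.2 (lc_le f)⟩ = toLex (Sum.inl (bottomPart f i)) :=
  (bottom_val f i).choose_spec

noncomputable def topPart (f : Fin n ↪o (β ⊕ₗ Fin r)) : Fin (rc f) ↪o Fin r :=
  OrderEmbedding.ofStrictMono (fun i => (top_val f i).choose)
    (by
      intro a b hab
      dsimp only
      apply (Sum.Lex.inr_lt_inr_iff (α := β)).1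
      rw [← (top_val f a).choose_spec, ← (top_val f b).choose_spec]
      apply f.strictMono
      simp only [Fin.mk_lt_mk]
      have : (a : ℕ) < b := hab
      omega)

lemma topPart_spec (f : Fin n ↪o (β ⊕ₗ Fin r)) (i : Fin (rc f)) :
    f ⟨lc f + i, by have := i.2; unfold rc at this; omega⟩ = toLex (Sum.inr (topPart f i)) :=
  (top_val f i).choose_spec

noncomputable def topSet (f : Fin n ↪o (β ⊕ₗ Fin r)) : Finset (Fin r) :=
  univ.image (topPart f)

lemma card_topSet (f : Fin n ↪o (β ⊕ₗ Fin r)) : (topSet f).card = rc f := by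
  rw [topSet, card_image_of_injective _ (topPart f).injective, card_univ, Fintype.card_fin]

/-- Cast an embedding along an equality of dimensions. -/
def castEmb {γ : Type*} [Preorder γ] {m m' : ℕ} (h : m = m') (g : Fin m' ↪o γ) :
    Fin m ↪o γ :=
  (Fin.castOrderIso h).toOrderEmbedding.trans g

@[simp] lemma castEmb_apply {γ : Type*} [Preorder γ] {m m' : ℕ} (h : m = m')
    (g : Fin m' ↪o γ) (i : Fin m) : castEmb h g i = g (Fin.cast h i) := rfl


section GlueLemmas
variable {j : ℕ} (g : Fin (n - j) ↪o β) (h : Fin j ↪o Fin r)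

lemma lc_glue : lc (glue g h) = n - j := by
  have hset : leftSet (glue g h) = univ.filter (fun i : Fin n => (i : ℕ) < n - j) := by
    ext i
    simp only [leftSet, mem_filter, mem_univ, true_and]
    by_cases hi : (i : ℕ) < n - j
    · rw [glue_apply_pos g h i hi]
      simp [hi]
    · rw [glue_apply_neg g h i hi]
      simp [hi]
  have hmap : univ.filter (fun i : Fin n => (i : ℕ) < n - j)
      = univ.map ((Fin.castLEOrderEmb (Nat.sub_le n j)).toEmbedding
          : Fin (n - j) ↪ Fin n) := by
    ext i
    simp only [mem_filter, mem_univ, true_and, mem_map]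
    constructor
    · intro hi
      exact ⟨⟨i, hi⟩, rfl⟩
    · rintro ⟨i', -, rfl⟩
      exact i'.2
  rw [lc, hset, hmap, card_map, card_univ, Fintype.card_fin]

lemma rc_glue (hj : j ≤ n) : rc (glue g h) = j := by
  rw [rc, lc_glue]; omega

lemma bottomPart_glue (i : ℕ) (h1 : i < lc (glue g h)) (h2 : i < n - j) :
    bottomPart (glue g h) ⟨i, h1⟩ = g ⟨i, h2⟩ := by
  have hspec := bottomPart_spec (glue g h) ⟨i, h1⟩
  have happ := glue_apply_pos g h ⟨i, lt_of_lt_of_le h1 (lc_le _)⟩ h2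
  rw [happ] at hspec
  exact (Sum.inl_injective (toLex.injective hspec)).symm

lemma castEmb_bottomPart_glue (hh : n - j = lc (glue g h)) :
    castEmb hh (bottomPart (glue g h)) = g := by
  ext i
  rw [castEmb_apply]
  have : (Fin.cast hh i : Fin (lc (glue g h))) = ⟨(i : ℕ), hh ▸ i.2⟩ := rfl
  rw [this, bottomPart_glue g h (i : ℕ) _ i.2]

lemma topPart_glue (hj : j ≤ n) (i : ℕ) (h1 : i < rc (glue g h)) (h2 : i < j) :
    topPart (glue g h) ⟨i, h1⟩ = h ⟨i, h2⟩ := by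
  have hspec := topPart_spec (glue g h) ⟨i, h1⟩
  have hlt : ¬ ((⟨lc (glue g h) + i, by have := lc_le (glue g h); unfold rc at h1; omega⟩ :
      Fin n) : ℕ) < n - j := by
    simp only [lc_glue]; omega
  have happ := glue_apply_neg g h _ hlt
  rw [happ] at hspec
  have := Sum.inr_injective (toLex.injective hspec)
  rw [← this]
  congr 1
  apply Fin.ext
  show ((⟨lc (glue g h) + i, _⟩ : Fin n) : ℕ) - (n - j) = i
  simp only [lc_glue]
  omega

lemma topSet_glue (hj : j ≤ n) : topSet (glue g h) = univ.image h := by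
  ext s
  simp only [topSet, mem_image, mem_univ, true_and]
  constructor
  · rintro ⟨i, rfl⟩
    have h2 : (i : ℕ) < j := by have h4 := i.2; have h5 := rc_glue g h hj; omega
    refine ⟨⟨i, h2⟩, ?_⟩
    have := topPart_glue g h hj i i.2 h2
    rw [← this]
  · rintro ⟨i, rfl⟩
    have h1 : (i : ℕ) < rc (glue g h) := by have h4 := i.2; have h5 := rc_glue g h hj; omega
    refine ⟨⟨i, h1⟩, ?_⟩
    have := topPart_glue g h hj i h1 i.2
    rw [this]

lemma glue_trans (e : (β ⊕ₗ Fin r) ↪o (β ⊕ₗ Fin r))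
    (he : ∀ i, e (toLex (Sum.inr i)) = toLex (Sum.inr i)) :
    (glue g h).trans e = glue (g.trans (restrictEmb e he)) h := by
  ext i
  show (e (glue g h i) : β ⊕ₗ Fin r) = glue (g.trans (restrictEmb e he)) h i
  by_cases hi : (i : ℕ) < n - j
  · rw [glue_apply_pos g h i hi, glue_apply_pos _ h i hi, restrict_spec e he]
    rfl
  · rw [glue_apply_neg g h i hi, glue_apply_neg _ h i hi, he]

lemma glue_decomp (f : Fin n ↪o (β ⊕ₗ Fin r)) :
    glue (castEmb (hlc f) (bottomPart f)) (topPart f) = f := by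
  ext i
  by_cases hi : (i : ℕ) < n - rc f
  · rw [glue_apply_pos _ _ i hi]
    have hi' : (i : ℕ) < lc f := by rw [← hlc f]; exact hi
    have : castEmb (hlc f) (bottomPart f) ⟨(i : ℕ), hi⟩ = bottomPart f ⟨(i : ℕ), hi'⟩ := rfl
    rw [this, ← bottomPart_spec f ⟨(i : ℕ), hi'⟩]
  · rw [glue_apply_neg _ _ i hi]
    have hi2 : (i : ℕ) - (n - rc f) < rc f := by
      have := i.2; have := lc_le f; unfold rc at *; omega
    have := topPart_spec f ⟨(i : ℕ) - (n - rc f), hi2⟩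
    rw [← this]
    congr 1
    apply Fin.ext
    show lc f + ((i : ℕ) - (n - rc f)) = (i : ℕ)
    have h3 := hlc f
    omega

end GlueLemmas

section Sets
variable {k : ℕ} {ι : Type*} [DecidableEq ι]

lemma ncard_biUnion_le (s : Finset ι) (A : ι → Set (Fin k)) :
    (⋃ i ∈ s, A i).ncard ≤ ∑ i ∈ s, (A i).ncard := by
  classical
  induction s using Finset.induction_on with
  | empty => simp
  | @insert a s' hx ih =>
    rw [Finset.set_biUnion_insert, Finset.sum_insert hx]
    exact le_trans (Set.ncard_union_le _ _) (Nat.add_le_add_left ih _)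

lemma le_ncard_biUnion (s : Finset ι) (A : ι → Set (Fin k))
    (hdisj : ∀ a ∈ s, ∀ b ∈ s, a ≠ b → Disjoint (A a) (A b)) :
    ∑ i ∈ s, (A i).ncard ≤ (⋃ i ∈ s, A i).ncard := by
  classical
  induction s using Finset.induction_on with
  | empty => simp
  | @insert a s' hx ih =>
    rw [Finset.set_biUnion_insert, Finset.sum_insert hx]
    have hd : Disjoint (A a) (⋃ i ∈ s', A i) := by
      rw [Set.disjoint_iUnion_right]
      intro i
      rw [Set.disjoint_iUnion_right]
      intro hi
      exact hdisj a (Finset.mem_insert_self a s') i (Finset.mem_insert_of_mem hi)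
        (fun hai => hx (hai ▸ hi))
    rw [Set.ncard_union_eq hd (Set.toFinite _) (Set.toFinite _)]
    have := ih (fun x hx' y hy' hxy =>
      hdisj x (Finset.mem_insert_of_mem hx') y (Finset.mem_insert_of_mem hy') hxy)
    omega

end Sets

section BrdLemmas
variable {α : Type*} [LinearOrder α]

lemma admissible_mono {m t t' : ℕ} (h : BrdAdmissible α m t) (htt : t ≤ t') :
    BrdAdmissible α m t' :=
  fun k hk χ => (h k hk χ).imp (fun _ he => he.trans htt)

lemma brd_le_of_admissible {m t : ℕ} (h : BrdAdmissible α m t) : brd α m ≤ t :=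
  sInf_le ⟨t, rfl, h⟩

lemma exists_admissible {m : ℕ} (h : brd α m ≠ ⊤) :
    ∃ t : ℕ, brd α m = t ∧ BrdAdmissible α m t := by
  have hne : {t : ℕ∞ | ∃ t₀ : ℕ, t = (t₀ : ℕ∞) ∧ BrdAdmissible α m t₀}.Nonempty := by
    by_contra hemp
    rw [Set.not_nonempty_iff_eq_empty] at hemp
    rw [brd, hemp, sInf_empty] at h
    exact h rfl
  obtain ⟨t₀, ht, hadm⟩ := csInf_mem hne
  exact ⟨t₀, ht, hadm⟩

lemma not_admissible_pred {m T : ℕ} (hT : brd α m = (T : ℕ∞)) (hT1 : 1 ≤ T) :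
    ∃ k : ℕ, 2 ≤ k ∧ ∃ χ : (Fin m ↪o α) → Fin k,
      ∀ e : α ↪o α, T ≤ ({c : Fin k | ∃ f : Fin m ↪o α, χ (f.trans e) = c}).ncard := by
  have hnadm : ¬ BrdAdmissible α m (T - 1) := by
    intro hadm
    have := brd_le_of_admissible hadm
    rw [hT] at this
    have := (Nat.cast_le (α := ℕ∞)).1 this
    omega
  rw [BrdAdmissible] at hnadm
  push_neg at hnadm
  obtain ⟨k, hk, χ, hχ⟩ := hnadm
  exact ⟨k, hk, χ, fun e => by have := hχ e; omega⟩

end BrdLemmas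

section Colorings
variable {k : ℕ}

/-- The induced coloring on the `β`-part for a fixed top set `S`. -/
def subColor (χ : (Fin n ↪o (β ⊕ₗ Fin r)) → Fin k) (S : Finset (Fin r)) :
    (Fin (n - S.card) ↪o β) → Fin k :=
  fun g => χ (glue g (S.orderEmbOfFin rfl))

/-- The index set of possible top sets. -/
def Pset (r n : ℕ) : Finset (Finset (Fin r)) :=
  univ.filter (fun S => S.card ≤ n)

lemma mem_Pset {S : Finset (Fin r)} : S ∈ Pset r n ↔ S.card ≤ n := by
  simp [Pset]

lemma sum_Pset (T : ℕ → ℕ) :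
    ∑ S ∈ Pset r n, T S.card = ∑ j ∈ Finset.range (min n r + 1), r.choose j * T j := by
  classical
  have hP : Pset r n = (Finset.range (min n r + 1)).biUnion
      (fun j => powersetCard j (univ : Finset (Fin r))) := by
    ext S
    simp only [Pset, mem_filter, mem_univ, true_and, mem_biUnion, Finset.mem_range,
      mem_powersetCard_univ]
    have hcr : S.card ≤ r := by
      have := card_le_card (subset_univ S)
      simpa using this
    constructor
    · intro hcn
      exact ⟨S.card, by omega, rfl⟩
    · rintro ⟨j, hj, rfl⟩
      omega
  rw [hP, Finset.sum_biUnion]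
  · apply Finset.sum_congr rfl
    intro j hj
    have : ∑ S ∈ powersetCard j (univ : Finset (Fin r)), T S.card
        = ∑ _S ∈ powersetCard j (univ : Finset (Fin r)), T j :=
      Finset.sum_congr rfl (fun S hS => by rw [mem_powersetCard_univ.1 hS])
    rw [this, Finset.sum_const, smul_eq_mul, card_powersetCard, card_univ, Fintype.card_fin]
  · intro a ha b hb hab
    simp only [Finset.disjoint_left]
    intro S hSa hSb
    exact hab (by rw [← mem_powersetCard_univ.1 hSa, ← mem_powersetCard_univ.1 hSb])

lemma apply_congr {γ : Sort*} {F : ∀ j : ℕ, (Fin (n - j) ↪o β) → γ} {j₁ j₂ : ℕ}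
    (hjj : j₁ = j₂) {g₁ : Fin (n - j₁) ↪o β} {g₂ : Fin (n - j₂) ↪o β}
    (hg : ∀ i h1 h2, g₁ ⟨i, h1⟩ = g₂ ⟨i, h2⟩) : F j₁ g₁ = F j₂ g₂ := by
  subst hjj
  have : g₁ = g₂ := by
    ext i
    have := hg i i.2 i.2
    simp only [Fin.eta] at this
    rw [this]
  rw [this]

lemma F_glue {γ : Sort*} (F : ∀ j : ℕ, (Fin (n - j) ↪o β) → γ) {j : ℕ} (hj : j ≤ n)
    (g' : Fin (n - j) ↪o β) (h : Fin j ↪o Fin r) :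
    F (rc (glue g' h)) (castEmb (hlc (glue g' h)) (bottomPart (glue g' h))) = F j g' := by
  apply apply_congr (rc_glue g' h hj)
  intro i h1 h2
  rw [castEmb_apply]
  have : (Fin.cast (hlc (glue g' h)) ⟨i, h1⟩ : Fin (lc (glue g' h)))
      = ⟨i, (hlc (glue g' h)) ▸ h1⟩ := rfl
  rw [this, bottomPart_glue g' h i _ h2]

lemma image_orderEmbOfFin (S : Finset (Fin r)) :
    (univ : Finset (Fin S.card)).image (S.orderEmbOfFin rfl) = S := by
  apply coe_injective
  rw [coe_image, coe_univ, Set.image_univ]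
  exact Finset.range_orderEmbOfFin S rfl

lemma topSet_glue_orderEmbOfFin {S : Finset (Fin r)} (hS : S.card ≤ n)
    (g : Fin (n - S.card) ↪o β) :
    topSet (glue g (S.orderEmbOfFin rfl)) = S := by
  rw [topSet_glue _ _ hS, image_orderEmbOfFin]

lemma attained_subset (χ : (Fin n ↪o (β ⊕ₗ Fin r)) → Fin k)
    (e : (β ⊕ₗ Fin r) ↪o (β ⊕ₗ Fin r))
    (he : ∀ i, e (toLex (Sum.inr i)) = toLex (Sum.inr i)) :
    {c : Fin k | ∃ f : Fin n ↪o (β ⊕ₗ Fin r), χ (f.trans e) = c} ⊆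
      ⋃ S ∈ Pset r n, {c : Fin k | ∃ g : Fin (n - S.card) ↪o β,
        subColor χ S (g.trans (restrictEmb e he)) = c} := by
  rintro c ⟨f, rfl⟩
  have hScard : (topSet f).card = rc f := card_topSet f
  have hSP : topSet f ∈ Pset r n := by
    rw [mem_Pset, hScard]
    exact Nat.sub_le n _
  apply Set.mem_biUnion hSP
  refine ⟨castEmb (by rw [hScard]; exact hlc f) (bottomPart f), ?_⟩
  have htrans : f.trans e
      = glue ((castEmb (hlc f) (bottomPart f)).trans (restrictEmb e he)) (topPart f) := by
    rw [← glue_trans _ _ e he, glue_decomp f]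
  rw [subColor, htrans]
  apply congrArg χ
  have huniq : (Fin.castOrderIso hScard).toOrderEmbedding.trans (topPart f)
      = (topSet f).orderEmbOfFin rfl :=
    Finset.orderEmbOfFin_unique' rfl (fun x => mem_image_of_mem _ (mem_univ _))
  apply glue_congr hScard
  · intro i h1 h2
    rfl
  · intro i h1 h2
    rw [← huniq]
    rfl

end Colorings

section Transfer
variable {k : ℕ}

/-- Selector coloring: apply `χ'` when the top part has size `j`, else junk. -/
def selColor {j : ℕ} (χ' : (Fin (n - j) ↪o β) → Fin k) (hk : 0 < k) :
    ∀ j' : ℕ, (Fin (n - j') ↪o β) → Fin k :=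
  fun j' g => if h : j' = j then χ' (castEmb (by rw [h]) g) else ⟨0, hk⟩

lemma selColor_self {j : ℕ} (χ' : (Fin (n - j) ↪o β) → Fin k) (hk : 0 < k)
    (g : Fin (n - j) ↪o β) : selColor χ' hk j g = χ' g := by
  rw [selColor, dif_pos rfl]
  apply congrArg χ'
  ext i
  rfl

lemma admissible_beta {t : ℕ}
    (hadm : BrdAdmissible (β ⊕ₗ Fin r) n t)
    (hfix : ∀ g : (β ⊕ₗ Fin r) ↪o (β ⊕ₗ Fin r), ∀ i : Fin r,
      g (toLex (Sum.inr i)) = toLex (Sum.inr i))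
    {j : ℕ} (hjn : j ≤ n) (hjr : j ≤ r) : BrdAdmissible β (n - j) t := by
  classical
  intro k hk χ'
  have hk0 : 0 < k := by omega
  obtain ⟨S₀, -, hS₀card⟩ := Finset.exists_subset_card_eq (s := (univ : Finset (Fin r))) (n := j)
    (by simpa using hjr)
  set χ : (Fin n ↪o (β ⊕ₗ Fin r)) → Fin k :=
    fun f => selColor χ' hk0 (rc f) (castEmb (hlc f) (bottomPart f)) with hχ
  obtain ⟨e, hecard⟩ := hadm k hk χ
  refine ⟨restrictEmb e (hfix e), ?_⟩
  refine le_trans (Set.ncard_le_ncard ?_ (Set.toFinite _)) hecard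
  rintro c ⟨g, rfl⟩
  refine ⟨glue g (S₀.orderEmbOfFin hS₀card), ?_⟩
  rw [hχ, glue_trans g (S₀.orderEmbOfFin hS₀card) e (hfix e)]
  dsimp only
  rw [F_glue (selColor χ' hk0) hjn (g.trans (restrictEmb e (hfix e))) (S₀.orderEmbOfFin hS₀card)]
  rw [selColor_self]

end Transfer


section Mix
variable {K' : ℕ}

/-- Combine a family of colorings into colorings with a common number of colors. -/
def mixColor (kk : ℕ → ℕ) (χχ : ∀ j, (Fin (n - j) ↪o β) → Fin (kk j))
    (hle : ∀ j, j ≤ min n r → kk j ≤ K') (hK : 0 < K') :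
    ∀ j, (Fin (n - j) ↪o β) → Fin K' :=
  fun j g => if hj : j ≤ min n r then Fin.castLE (hle j hj) (χχ j g) else ⟨0, hK⟩

lemma mixColor_spec (kk : ℕ → ℕ) (χχ : ∀ j, (Fin (n - j) ↪o β) → Fin (kk j))
    (hle : ∀ j, j ≤ min n r → kk j ≤ K') (hK : 0 < K') {j : ℕ} (hj : j ≤ min n r)
    (g : Fin (n - j) ↪o β) :
    mixColor (r := r) kk χχ hle hK j g = Fin.castLE (hle j hj) (χχ j g) := dif_pos hj

end Mix

end BrdAux

open BrdAux Finset in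
theorem statement6' {β : Type*} [LinearOrder β] {r n : ℕ}
    (hfix : ∀ g : (β ⊕ₗ Fin r) ↪o (β ⊕ₗ Fin r), ∀ i : Fin r,
      g (toLex (Sum.inr i)) = toLex (Sum.inr i))
    (hfin : brd (β ⊕ₗ Fin r) n ≠ ⊤) :
    brd (β ⊕ₗ Fin r) n
      = ∑ j ∈ Finset.range (min n r + 1), (r.choose j : ℕ∞) * brd β (n - j) := by
  classical
  obtain ⟨t₀, ht₀, hadm₀⟩ := exists_admissible hfin
  have hβadm : ∀ j, j ≤ min n r → BrdAdmissible β (n - j) t₀ := fun j hj =>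
    admissible_beta hadm₀ hfix (le_trans hj (min_le_left _ _)) (le_trans hj (min_le_right _ _))
  have hβfin : ∀ j, j ≤ min n r → brd β (n - j) ≠ ⊤ := fun j hj => by
    have h1 := brd_le_of_admissible (hβadm j hj)
    intro htop
    rw [htop] at h1
    exact absurd (top_le_iff.1 h1) (by simp)
  have hT : ∀ j, ∃ T : ℕ, j ≤ min n r →
      (brd β (n - j) = (T : ℕ∞) ∧ BrdAdmissible β (n - j) T) := by
    intro j
    by_cases hj : j ≤ min n r
    · obtain ⟨T, h1, h2⟩ := exists_admissible (hβfin j hj)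
      exact ⟨T, fun _ => ⟨h1, h2⟩⟩
    · exact ⟨0, fun h => absurd h hj⟩
  choose T hTspec using hT
  set N := ∑ j ∈ Finset.range (min n r + 1), r.choose j * T j with hN
  have hRHS : ∑ j ∈ Finset.range (min n r + 1), (r.choose j : ℕ∞) * brd β (n - j)
      = (N : ℕ∞) := by
    rw [hN]
    push_cast
    apply Finset.sum_congr rfl
    intro j hj
    rw [(hTspec j (by rw [Finset.mem_range] at hj; omega)).1]
  rw [hRHS, ht₀]
  -- upper bound: N is admissible
  have hupper : BrdAdmissible (β ⊕ₗ Fin r) n N := by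
    intro k hk χ
    have hsim : ∀ Q : Finset (Finset (Fin r)), Q ⊆ Pset r n → ∃ eB : β ↪o β,
        ∀ S ∈ Q, ({c : Fin k | ∃ g : Fin (n - S.card) ↪o β,
          subColor χ S (g.trans eB) = c}).ncard ≤ T S.card := by
      intro Q
      induction Q using Finset.induction_on with
      | empty => exact fun _ => ⟨(OrderIso.refl β).toOrderEmbedding, by simp⟩
      | @insert S Q' hS ih =>
        intro hsub
        obtain ⟨e₁, he₁⟩ := ih (fun x hx => hsub (Finset.mem_insert_of_mem hx))
        have hScard : S.card ≤ min n r := by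
          have h1 : S.card ≤ n := mem_Pset.1 (hsub (Finset.mem_insert_self _ _))
          have h2 : S.card ≤ r := by simpa using Finset.card_le_card (Finset.subset_univ S)
          omega
        obtain ⟨e₂, he₂⟩ := (hTspec S.card hScard).2 k hk
          (fun g => subColor χ S (g.trans e₁))
        refine ⟨e₂.trans e₁, ?_⟩
        intro S' hS'
        rcases Finset.mem_insert.1 hS' with rfl | hS'mem
        · refine le_trans (Set.ncard_le_ncard ?_ (Set.toFinite _)) he₂
          rintro c ⟨g, rfl⟩
          exact ⟨g, rfl⟩
        · refine le_trans (Set.ncard_le_ncard ?_ (Set.toFinite _)) (he₁ S' hS'mem)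
          rintro c ⟨g, rfl⟩
          exact ⟨g.trans e₂, rfl⟩
    obtain ⟨eB, heB⟩ := hsim (Pset r n) (subset_refl _)
    refine ⟨extendEmb eB, ?_⟩
    have hsub := attained_subset χ (extendEmb eB) (fun i => extendEmb_inr eB i)
    rw [restrict_extend eB] at hsub
    refine le_trans (Set.ncard_le_ncard hsub (Set.toFinite _)) ?_
    refine le_trans (ncard_biUnion_le _ _) ?_
    refine le_trans (Finset.sum_le_sum heB) ?_
    exact le_of_eq (sum_Pset T)
  have hub : (t₀ : ℕ∞) ≤ (N : ℕ∞) := ht₀ ▸ brd_le_of_admissible hupper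
  -- lower bound
  have hbad : ∀ j, ∃ kj : ℕ, 2 ≤ kj ∧ ∃ χj : (Fin (n - j) ↪o β) → Fin kj,
      ∀ eB : β ↪o β, (if j ≤ min n r then T j else 0)
        ≤ ({c : Fin kj | ∃ g : Fin (n - j) ↪o β, χj (g.trans eB) = c}).ncard := by
    intro j
    by_cases hj : j ≤ min n r
    · by_cases hT0 : T j = 0
      · exact ⟨2, le_refl 2, fun _ => 0, fun eB => by simp [hj, hT0]⟩
      · obtain ⟨kj, hkj, χj, hχj⟩ := not_admissible_pred (hTspec j hj).1 (by omega)
        exact ⟨kj, hkj, χj, fun eB => by rw [if_pos hj]; exact hχj eB⟩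
    · exact ⟨2, le_refl 2, fun _ => 0, fun eB => by simp [hj]⟩
  choose kk hkk2 χχ hχχ using hbad
  set K' := 2 + ∑ j ∈ Finset.range (min n r + 1), kk j with hK'
  have hK'2 : 2 ≤ K' := Nat.le_add_right 2 _
  have hkkle : ∀ j, j ≤ min n r → kk j ≤ K' := by
    intro j hj
    have h1 : kk j ≤ ∑ j ∈ Finset.range (min n r + 1), kk j :=
      Finset.single_le_sum (fun _ _ => Nat.zero_le _) (Finset.mem_range.2 (by omega))
    omega
  set χ' : ∀ j, (Fin (n - j) ↪o β) → Fin K' :=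
    mixColor (r := r) kk χχ hkkle (by omega) with hχ'def
  have hχ'bound : ∀ j, j ≤ min n r → ∀ eB : β ↪o β,
      T j ≤ ({c : Fin K' | ∃ g : Fin (n - j) ↪o β, χ' j (g.trans eB) = c}).ncard := by
    intro j hj eB
    have himg : {c : Fin K' | ∃ g : Fin (n - j) ↪o β, χ' j (g.trans eB) = c}
        = Fin.castLE (hkkle j hj)
          '' {c : Fin (kk j) | ∃ g : Fin (n - j) ↪o β, χχ j (g.trans eB) = c} := by
      ext c
      simp only [hχ'def, Set.mem_image, Set.mem_setOf_eq,
        mixColor_spec kk χχ hkkle (by omega) hj]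
      constructor
      · rintro ⟨g, rfl⟩
        exact ⟨_, ⟨g, rfl⟩, rfl⟩
      · rintro ⟨c', ⟨g, rfl⟩, rfl⟩
        exact ⟨g, rfl⟩
    rw [himg, Set.ncard_image_of_injective _ (Fin.castLE_injective _)]
    have h2 := hχχ j eB
    rw [if_pos hj] at h2
    exact h2
  set γeq := Fintype.equivFin (Finset (Fin r) × Fin K') with hγeq
  set K := Fintype.card (Finset (Fin r) × Fin K') with hK
  have hK2 : 2 ≤ K := by
    rw [hK, Fintype.card_prod, Fintype.card_fin]
    have h1 : 1 ≤ Fintype.card (Finset (Fin r)) := Fintype.card_pos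
    calc 2 ≤ K' := hK'2
    _ = 1 * K' := (one_mul _).symm
    _ ≤ Fintype.card (Finset (Fin r)) * K' := Nat.mul_le_mul h1 le_rfl
  set χbig : (Fin n ↪o (β ⊕ₗ Fin r)) → Fin K :=
    fun f => γeq (topSet f, χ' (rc f) (castEmb (hlc f) (bottomPart f))) with hχbig
  obtain ⟨e, he⟩ := hadm₀ K hK2 χbig
  set eB := restrictEmb e (hfix e) with heB
  have himg : ∀ S ∈ Pset r n,
      (fun c => γeq (S, c)) '' {c : Fin K' | ∃ g : Fin (n - S.card) ↪o β,
          χ' S.card (g.trans eB) = c}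
        ⊆ {c : Fin K | ∃ f : Fin n ↪o (β ⊕ₗ Fin r), χbig (f.trans e) = c} := by
    intro S hS x hx
    obtain ⟨c, ⟨g, rfl⟩, rfl⟩ := hx
    refine ⟨glue g (S.orderEmbOfFin rfl), ?_⟩
    have hcard : S.card ≤ n := mem_Pset.1 hS
    rw [hχbig, glue_trans g (S.orderEmbOfFin rfl) e (hfix e)]
    dsimp only
    rw [F_glue χ' hcard (g.trans eB) (S.orderEmbOfFin rfl)]
    rw [topSet_glue_orderEmbOfFin hcard (g.trans eB)]
  have hdisj : ∀ a ∈ Pset r n, ∀ b ∈ Pset r n, a ≠ b →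
      Disjoint ((fun c => γeq (a, c)) '' {c : Fin K' | ∃ g : Fin (n - a.card) ↪o β,
          χ' a.card (g.trans eB) = c})
        ((fun c => γeq (b, c)) '' {c : Fin K' | ∃ g : Fin (n - b.card) ↪o β,
          χ' b.card (g.trans eB) = c}) := by
    intro a _ b _ hab
    rw [Set.disjoint_left]
    rintro x ⟨c1, -, rfl⟩ ⟨c2, -, hx2⟩
    have := γeq.injective hx2
    exact hab ((Prod.ext_iff.1 this).1.symm)
  have hcount : N ≤ ({c : Fin K | ∃ f : Fin n ↪o (β ⊕ₗ Fin r), χbig (f.trans e) = c}).ncard := by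
    have hstep1 : N = ∑ S ∈ Pset r n, T S.card := (sum_Pset T).symm
    have hstep2 : ∑ S ∈ Pset r n, T S.card
        ≤ ∑ S ∈ Pset r n, ((fun c => γeq (S, c)) '' {c : Fin K' |
            ∃ g : Fin (n - S.card) ↪o β, χ' S.card (g.trans eB) = c}).ncard := by
      apply Finset.sum_le_sum
      intro S hS
      have hinj : Function.Injective (fun c : Fin K' => γeq (S, c)) := by
        intro c₁ c₂ hcc
        have := γeq.injective hcc
        exact (Prod.ext_iff.1 this).2
      rw [Set.ncard_image_of_injective _ hinj]
      have hScard : S.card ≤ min n r := by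
        have h1 : S.card ≤ n := mem_Pset.1 hS
        have h2 : S.card ≤ r := by simpa using Finset.card_le_card (Finset.subset_univ S)
        omega
      exact hχ'bound S.card hScard eB
    have hstep3 := le_ncard_biUnion (Pset r n) _ hdisj
    have hstep4 : (⋃ S ∈ Pset r n, (fun c => γeq (S, c)) '' {c : Fin K' |
          ∃ g : Fin (n - S.card) ↪o β, χ' S.card (g.trans eB) = c}).ncard
        ≤ ({c : Fin K | ∃ f : Fin n ↪o (β ⊕ₗ Fin r), χbig (f.trans e) = c}).ncard := by
      apply Set.ncard_le_ncard _ (Set.toFinite _)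
      exact Set.iUnion₂_subset himg
    omega
  have hlb : N ≤ t₀ := le_trans hcount he
  have hub' : t₀ ≤ N := by exact_mod_cast hub
  norm_cast
  omega

/-- If `B` is a chain with no maximal element, every self-embedding of `B + r` fixes the
final `r`-element chain pointwise, and `T(n, B + r) < ∞`, then
`T(n, B + r) = Σ_{j=0}^{min n r} C(r, j) · T(n - j, B)`. -/
theorem statement6 {β : Type*} [LinearOrder β] [NoMaxOrder β] {r n : ℕ}
    (hfix : ∀ g : (β ⊕ₗ Fin r) ↪o (β ⊕ₗ Fin r), ∀ i : Fin r,
      g (toLex (Sum.inr i)) = toLex (Sum.inr i))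
    (hfin : brd (β ⊕ₗ Fin r) n ≠ ⊤) :
    brd (β ⊕ₗ Fin r) n
      = ∑ j ∈ Finset.range (min n r + 1), (r.choose j : ℕ∞) * brd β (n - j) :=
  statement6' hfix hfin
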